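/- For every influence I, every k ∈ ℕ, every depth-k local policy π, and every local state x ∈ X: max_{d∈D} ν^I_k(π)(x,d) ≤ ν^D_k(π)(x). That is, the influence-optimistic plan-time (Dec-POMDP) value vectors pointwise dominate the influence-induced value vectors of the influence-augmented sub-problem, uniformly over d-separating-set values. -/

import Mathlib

open Finset

section LocalModel

variable {Xl Xn A O U D : Type*}
  [Fintype Xl] [Nonempty Xl] [Fintype Xn] [Nonempty Xn]
  [Fintype A] [Nonempty A] [Fintype O] [Nonempty O]
  [Fintype U] [Nonempty U] [Fintype D] [Nonempty D]

/-- Influence-induced value vectors `ν^I_k(π)(x,d)` of the influence-augmented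
sub-problem. A depth-`k` local policy is a function `List O → A`; `π []` is its action
at the empty history and `fun h => π (o :: h)` is the subtree policy `π↓o`. -/
noncomputable def nuI (Pl : Xl → (Xl × Xn) → A → ℝ) (Pn : Xn → (Xl × Xn) → A → U → ℝ)
    (Ω : O → A → (Xl × Xn) → ℝ) (δ : (Xl × Xn) → D → A → (Xl × Xn) → D)
    (r : A → (Xl × Xn) → ℝ) (I : D → U → ℝ) :
    ℕ → (List O → A) → (Xl × Xn) → D → ℝ
  | 0 => fun _ _ _ => 0
  | k + 1 => fun π x d =>
      r (π []) x + ∑ o : O, ∑ x' : Xl × Xn,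
        Ω o (π []) x' * Pl x'.1 x (π []) *
          (∑ u : U, Pn x'.2 x (π []) u * I d u) *
          nuI Pl Pn Ω δ r I k (fun h => π (o :: h)) x' (δ x d (π []) x')

/-- Influence-optimistic (IO, Q-MPOMDP style) value vectors `ν^IO_k(π)(x)`. -/
noncomputable def nuIO (Pl : Xl → (Xl × Xn) → A → ℝ) (Pn : Xn → (Xl × Xn) → A → U → ℝ)
    (Ω : O → A → (Xl × Xn) → ℝ) (r : A → (Xl × Xn) → ℝ) :
    ℕ → (List O → A) → (Xl × Xn) → ℝ
  | 0 => fun _ _ => 0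
  | k + 1 => fun π x =>
      r (π []) x + ∑ o : O,
        Finset.univ.sup' Finset.univ_nonempty (fun u : U =>
          ∑ x' : Xl × Xn,
            Ω o (π []) x' * Pl x'.1 x (π []) * Pn x'.2 x (π []) u *
              nuIO Pl Pn Ω r k (fun h => π (o :: h)) x')

end LocalModel

section LocalModel

variable {Xl Xn A O U D : Type*}
  [Fintype Xl] [Nonempty Xl] [Fintype Xn] [Nonempty Xn]
  [Fintype A] [Nonempty A] [Fintype O] [Nonempty O]
  [Fintype U] [Nonempty U] [Fintype D] [Nonempty D]

/-- Influence-optimistic plan-time (Dec-POMDP) value vectors `ν^D_k(π)(x)`. -/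
noncomputable def nuD (Pl : Xl → (Xl × Xn) → A → ℝ) (Pn : Xn → (Xl × Xn) → A → U → ℝ)
    (Ω : O → A → (Xl × Xn) → ℝ) (r : A → (Xl × Xn) → ℝ) :
    ℕ → (List O → A) → (Xl × Xn) → ℝ
  | 0 => fun _ _ => 0
  | k + 1 => fun π x =>
      r (π []) x +
        Finset.univ.sup' Finset.univ_nonempty (fun u : U =>
          ∑ o : O, ∑ x' : Xl × Xn,
            Ω o (π []) x' * Pl x'.1 x (π []) * Pn x'.2 x (π []) u *
              nuD Pl Pn Ω r k (fun h => π (o :: h)) x')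

/-- the influence-optimistic plan-time (Dec-POMDP) value vectors pointwise
dominate the influence-induced value vectors of the influence-augmented sub-problem,
uniformly over d-separating-set values. -/
theorem nuI_le_nuD
    (Pl : Xl → (Xl × Xn) → A → ℝ) (Pn : Xn → (Xl × Xn) → A → U → ℝ)
    (Ω : O → A → (Xl × Xn) → ℝ) (δ : (Xl × Xn) → D → A → (Xl × Xn) → D)
    (r : A → (Xl × Xn) → ℝ)
    (hPl0 : ∀ x'l x a, 0 ≤ Pl x'l x a) (hPl1 : ∀ x a, ∑ x'l : Xl, Pl x'l x a = 1)
    (hPn0 : ∀ x'n x a u, 0 ≤ Pn x'n x a u) (hPn1 : ∀ x a u, ∑ x'n : Xn, Pn x'n x a u = 1)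
    (hΩ0 : ∀ o a x', 0 ≤ Ω o a x') (hΩ1 : ∀ a x', ∑ o : O, Ω o a x' = 1)
    (I : D → U → ℝ) (hI0 : ∀ d u, 0 ≤ I d u) (hI1 : ∀ d, ∑ u : U, I d u = 1)
    (k : ℕ) (π : List O → A) (x : Xl × Xn) :
    Finset.univ.sup' Finset.univ_nonempty (fun d : D => nuI Pl Pn Ω δ r I k π x d) ≤
      nuD Pl Pn Ω r k π x := by
  induction k generalizing π x with
  | zero => simp [nuI, nuD]
  | succ k ih =>
    apply Finset.sup'_le
    intro d _
    simp only [nuI, nuD]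
    apply add_le_add (le_refl _)
    set a := π [] with ha
    have step1 :
        ∑ o : O, ∑ x' : Xl × Xn,
          Ω o a x' * Pl x'.1 x a * (∑ u : U, Pn x'.2 x a u * I d u) *
            nuI Pl Pn Ω δ r I k (fun h => π (o :: h)) x' (δ x d a x')
        ≤ ∑ o : O, ∑ x' : Xl × Xn,
          Ω o a x' * Pl x'.1 x a * (∑ u : U, Pn x'.2 x a u * I d u) *
            nuD Pl Pn Ω r k (fun h => π (o :: h)) x' := by
      refine Finset.sum_le_sum fun o _ => Finset.sum_le_sum fun x' _ => ?_
      apply mul_le_mul_of_nonneg_left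
      · exact le_trans (Finset.le_sup' _ (Finset.mem_univ (δ x d a x'))) (ih _ _)
      · exact mul_nonneg (mul_nonneg (hΩ0 _ _ _) (hPl0 _ _ _))
          (Finset.sum_nonneg fun u _ => mul_nonneg (hPn0 _ _ _ _) (hI0 _ _))
    refine step1.trans ?_
    have eq1 :
        ∑ o : O, ∑ x' : Xl × Xn,
          Ω o a x' * Pl x'.1 x a * (∑ u : U, Pn x'.2 x a u * I d u) *
            nuD Pl Pn Ω r k (fun h => π (o :: h)) x'
        = ∑ u : U, I d u *
            ∑ o : O, ∑ x' : Xl × Xn,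
              Ω o a x' * Pl x'.1 x a * Pn x'.2 x a u *
                nuD Pl Pn Ω r k (fun h => π (o :: h)) x' := by
      calc ∑ o : O, ∑ x' : Xl × Xn,
            Ω o a x' * Pl x'.1 x a * (∑ u : U, Pn x'.2 x a u * I d u) *
              nuD Pl Pn Ω r k (fun h => π (o :: h)) x'
          = ∑ o : O, ∑ x' : Xl × Xn, ∑ u : U,
              I d u * (Ω o a x' * Pl x'.1 x a * Pn x'.2 x a u *
                nuD Pl Pn Ω r k (fun h => π (o :: h)) x') := by
            refine Finset.sum_congr rfl fun o _ => Finset.sum_congr rfl fun x' _ => ?_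
            simp only [Finset.mul_sum, Finset.sum_mul]
            exact Finset.sum_congr rfl fun u _ => by ring
        _ = ∑ o : O, ∑ u : U, ∑ x' : Xl × Xn,
              I d u * (Ω o a x' * Pl x'.1 x a * Pn x'.2 x a u *
                nuD Pl Pn Ω r k (fun h => π (o :: h)) x') :=
            Finset.sum_congr rfl fun o _ => Finset.sum_comm
        _ = ∑ u : U, ∑ o : O, ∑ x' : Xl × Xn,
              I d u * (Ω o a x' * Pl x'.1 x a * Pn x'.2 x a u *
                nuD Pl Pn Ω r k (fun h => π (o :: h)) x') :=
            Finset.sum_comm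
        _ = ∑ u : U, I d u * ∑ o : O, ∑ x' : Xl × Xn,
              Ω o a x' * Pl x'.1 x a * Pn x'.2 x a u *
                nuD Pl Pn Ω r k (fun h => π (o :: h)) x' := by
            simp only [Finset.mul_sum]
    rw [eq1]
    set g : U → ℝ := fun u =>
      ∑ o : O, ∑ x' : Xl × Xn,
        Ω o a x' * Pl x'.1 x a * Pn x'.2 x a u *
          nuD Pl Pn Ω r k (fun h => π (o :: h)) x' with hg
    calc ∑ u : U, I d u * g u
        ≤ ∑ u : U, I d u * Finset.univ.sup' Finset.univ_nonempty g :=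
          Finset.sum_le_sum fun u _ => mul_le_mul_of_nonneg_left
            (Finset.le_sup' g (Finset.mem_univ u)) (hI0 d u)
      _ = Finset.univ.sup' Finset.univ_nonempty g := by
          rw [← Finset.sum_mul, hI1, one_mul]

end LocalModel
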